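/- Let G be a bipartite graph with parts A and B, |A| ≤ |B|, and minimum degree δ ≥ |B|/2 + 1. If x and y are two distinct vertices both in A or both in B, then G contains an x–y path of length t for every even t with 2 ≤ t ≤ 2(2δ - |A| - 1). -/

import Mathlib

open SimpleGraph Finset

/-- Auxiliary: given a nodup "spine" list of vertices in `B`, we can connect
consecutive spine vertices through fresh vertices of `A` avoiding a forbidden
set `F`, producing a path of twice the spine-gap length. -/
private lemma chain_aux {V : Type*} [Fintype V] [DecidableEq V]
    (G : SimpleGraph V) [DecidableRel G.Adj] (A B : Finset V)
    (hdisj : Disjoint A B)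
    (hNB : ∀ u ∈ B, G.neighborFinset u ⊆ A)
    (hcom : ∀ u v : V, u ∈ B → v ∈ B →
      2 * G.minDegree ≤ A.card + (G.neighborFinset u ∩ G.neighborFinset v).card) :
    ∀ (l : List V) (F : Finset V) (c₀ cl : V),
      (c₀ :: (l ++ [cl])).Nodup → (∀ v ∈ c₀ :: (l ++ [cl]), v ∈ B) →
      F.card + l.length + 1 + A.card ≤ 2 * G.minDegree →
      ∃ w : G.Walk c₀ cl, w.IsPath ∧ w.length = 2 * (l.length + 1) ∧
        ∀ v ∈ w.support, v ∈ c₀ :: (l ++ [cl]) ∨ (v ∈ A ∧ v ∉ F) := by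
  have pick : ∀ (u v : V) (F : Finset V), u ∈ B → v ∈ B →
      F.card + 1 + A.card ≤ 2 * G.minDegree →
      ∃ a, G.Adj u a ∧ G.Adj v a ∧ a ∉ F ∧ a ∈ A := by
    intro u v F hu hv hcard
    have h1 := hcom u v hu hv
    have h2 : ((G.neighborFinset u ∩ G.neighborFinset v) \ F).Nonempty := by
      rw [← Finset.card_pos]
      have := Finset.card_le_card_sdiff_add_card
        (s := G.neighborFinset u ∩ G.neighborFinset v) (t := F)
      omega
    obtain ⟨a, ha⟩ := h2
    rw [Finset.mem_sdiff, Finset.mem_inter] at ha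
    exact ⟨a, (G.mem_neighborFinset _ _).1 ha.1.1, (G.mem_neighborFinset _ _).1 ha.1.2,
      ha.2, hNB u hu ha.1.1⟩
  intro l
  induction l with
  | nil =>
    intro F c₀ cl hnd hB hcard
    simp only [List.nil_append, List.length_nil] at *
    have hc₀ : c₀ ∈ B := hB c₀ (by simp)
    have hcl : cl ∈ B := hB cl (by simp)
    obtain ⟨a, ha1, ha2, haF, haA⟩ := pick c₀ cl F hc₀ hcl (by omega)
    refine ⟨Walk.cons ha1 (Walk.cons ha2.symm Walk.nil), ?_, by simp, ?_⟩
    · rw [Walk.isPath_def]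
      simp only [Walk.support_cons, Walk.support_nil]
      have h1 : c₀ ≠ cl := by
        intro h; simp [h] at hnd
      have h2 : a ≠ c₀ := fun h => (Finset.disjoint_left.1 hdisj) (h ▸ haA) hc₀
      have h3 : a ≠ cl := fun h => (Finset.disjoint_left.1 hdisj) (h ▸ haA) hcl
      simp [h1, h2.symm, h3]
    · intro v hv
      simp only [Walk.support_cons, Walk.support_nil, List.mem_cons] at hv
      rcases hv with rfl | rfl | hv
      · exact Or.inl (by simp)
      · exact Or.inr ⟨haA, haF⟩
      · simp at hv; subst hv; exact Or.inl (by simp)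
  | cons c₁ l' ih =>
    intro F c₀ cl hnd hB hcard
    have hc₀ : c₀ ∈ B := hB c₀ (by simp)
    have hc₁ : c₁ ∈ B := hB c₁ (by simp)
    obtain ⟨a, ha1, ha2, haF, haA⟩ := pick c₀ c₁ F hc₀ hc₁ (by
      simp only [List.length_cons] at hcard; omega)
    have hnd' : (c₁ :: (l' ++ [cl])).Nodup := by
      simp only [List.cons_append, List.nodup_cons] at hnd ⊢
      exact hnd.2
    have hB' : ∀ v ∈ c₁ :: (l' ++ [cl]), v ∈ B := by
      intro v hv
      exact hB v (by simp only [List.cons_append, List.mem_cons] at hv ⊢; tauto)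
    have hcard' : (insert a F).card + l'.length + 1 + A.card ≤ 2 * G.minDegree := by
      have := Finset.card_insert_le a F
      simp only [List.length_cons] at hcard; omega
    obtain ⟨w', hw'path, hw'len, hw'supp⟩ := ih (insert a F) c₁ cl hnd' hB' hcard'
    have haw' : a ∉ w'.support := by
      intro h
      rcases hw'supp a h with h' | h'
      · exact (Finset.disjoint_left.1 hdisj) haA (hB' a h')
      · exact h'.2 (Finset.mem_insert_self a F)
    have hc₀w' : c₀ ∉ w'.support := by
      intro h
      rcases hw'supp c₀ h with h' | h'
      · simp only [List.cons_append, List.nodup_cons] at hnd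
        exact hnd.1 (by simpa using h')
      · exact (Finset.disjoint_left.1 hdisj) h'.1 hc₀
    refine ⟨Walk.cons ha1 (Walk.cons ha2.symm w'), ?_, ?_, ?_⟩
    · rw [Walk.cons_isPath_iff, Walk.cons_isPath_iff]
      refine ⟨⟨hw'path, haw'⟩, ?_⟩
      simp only [Walk.support_cons, List.mem_cons, not_or]
      exact ⟨fun h => Finset.disjoint_left.1 hdisj (show c₀ ∈ A by rw [h]; exact haA) hc₀, hc₀w'⟩
    · simp only [Walk.length_cons, hw'len, List.length_cons]; omega
    · intro v hv
      simp only [Walk.support_cons, List.mem_cons] at hv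
      rcases hv with rfl | rfl | hv
      · exact Or.inl (by simp)
      · exact Or.inr ⟨haA, haF⟩
      · rcases hw'supp v hv with h' | h'
        · exact Or.inl (by simp only [List.cons_append, List.mem_cons] at h' ⊢; tauto)
        · exact Or.inr ⟨h'.1, fun hvF => h'.2 (Finset.mem_insert_of_mem hvF)⟩

theorem bipartite_even_paths {V : Type*} [Fintype V] [DecidableEq V]
    (G : SimpleGraph V) [DecidableRel G.Adj] (A B : Finset V)
    (hdisj : Disjoint A B) (hcover : A ∪ B = univ)
    (hbip : ∀ u v, G.Adj u v → (u ∈ A ∧ v ∈ B) ∨ (u ∈ B ∧ v ∈ A))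
    (hAB : A.card ≤ B.card)
    (hδ : (B.card : ℚ) / 2 + 1 ≤ (G.minDegree : ℚ))
    (x y : V) (hxy : x ≠ y) (hsame : (x ∈ A ∧ y ∈ A) ∨ (x ∈ B ∧ y ∈ B)) :
    ∀ t : ℕ, Even t → 2 ≤ t →
      (t : ℤ) ≤ 2 * (2 * (G.minDegree : ℤ) - A.card - 1) →
      ∃ w : G.Walk x y, w.IsPath ∧ w.length = t := by
  intro t ht2 hge hle
  haveI : Nonempty V := ⟨x⟩
  have hdeg : ∀ v : V, G.minDegree ≤ (G.neighborFinset v).card := fun v => by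
    rw [G.card_neighborFinset_eq_degree]; exact G.minDegree_le_degree v
  have h2δ : B.card + 2 ≤ 2 * G.minDegree := by
    have h : (B.card : ℚ) + 2 ≤ 2 * (G.minDegree : ℚ) := by linarith
    exact_mod_cast h
  have δpos : 1 ≤ G.minDegree := by omega
  have hNB : ∀ u ∈ B, G.neighborFinset u ⊆ A := by
    intro u hu a ha
    rcases hbip u a ((G.mem_neighborFinset _ _).1 ha) with h | h
    · exact absurd hu (Finset.disjoint_left.1 hdisj h.1)
    · exact h.2
  have hNA : ∀ u ∈ A, G.neighborFinset u ⊆ B := by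
    intro u hu a ha
    rcases hbip u a ((G.mem_neighborFinset _ _).1 ha) with h | h
    · exact h.2
    · exact absurd h.1 (Finset.disjoint_left.1 hdisj hu)
  have hAne : A.Nonempty ∧ B.Nonempty := by
    obtain ⟨u, hu⟩ := Finset.card_pos.1 (lt_of_lt_of_le δpos (hdeg x))
    rcases hbip x u ((G.mem_neighborFinset _ _).1 hu) with h | h
    · exact ⟨⟨x, h.1⟩, ⟨u, h.2⟩⟩
    · exact ⟨⟨u, h.2⟩, ⟨x, h.1⟩⟩
  have hδA : G.minDegree ≤ A.card := by
    obtain ⟨b, hb⟩ := hAne.2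
    exact le_trans (hdeg b) (Finset.card_le_card (hNB b hb))
  have hδB : G.minDegree ≤ B.card := by
    obtain ⟨a, ha⟩ := hAne.1
    exact le_trans (hdeg a) (Finset.card_le_card (hNA a ha))
  have hcomB : ∀ u v : V, u ∈ B → v ∈ B →
      2 * G.minDegree ≤ A.card + (G.neighborFinset u ∩ G.neighborFinset v).card := by
    intro u v hu hv
    have h1 := Finset.card_inter_add_card_union (G.neighborFinset u) (G.neighborFinset v)
    have h2 : (G.neighborFinset u ∪ G.neighborFinset v).card ≤ A.card :=
      Finset.card_le_card (Finset.union_subset (hNB u hu) (hNB v hv))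
    have h3 := hdeg u
    have h4 := hdeg v
    omega
  have hcomA : ∀ u v : V, u ∈ A → v ∈ A →
      2 * G.minDegree ≤ B.card + (G.neighborFinset u ∩ G.neighborFinset v).card := by
    intro u v hu hv
    have h1 := Finset.card_inter_add_card_union (G.neighborFinset u) (G.neighborFinset v)
    have h2 : (G.neighborFinset u ∪ G.neighborFinset v).card ≤ B.card :=
      Finset.card_le_card (Finset.union_subset (hNA u hu) (hNA v hv))
    have h3 := hdeg u
    have h4 := hdeg v
    omega
  obtain ⟨k, hk⟩ := ht2
  have hk1 : 1 ≤ k := by omega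
  have hkb : k + A.card + 1 ≤ 2 * G.minDegree := by omega
  have hBk : k + 1 ≤ B.card := by omega
  rcases hsame with ⟨hxA, hyA⟩ | ⟨hxB, hyB⟩
  · -- x, y ∈ A
    rcases eq_or_lt_of_le hk1 with hk1' | hk2
    · -- k = 1 : common neighbor
      have h1 := hcomA x y hxA hyA
      obtain ⟨b, hb⟩ := Finset.card_pos.1 (show 0 <
          (G.neighborFinset x ∩ G.neighborFinset y).card by omega)
      rw [Finset.mem_inter] at hb
      have hbB : b ∈ B := hNA x hxA hb.1
      refine ⟨Walk.cons ((G.mem_neighborFinset _ _).1 hb.1)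
        (Walk.cons ((G.mem_neighborFinset _ _).1 hb.2).symm Walk.nil), ?_, by simp; omega⟩
      rw [Walk.isPath_def]
      simp only [Walk.support_cons, Walk.support_nil]
      have h2 : x ≠ b := fun h => Finset.disjoint_left.1 hdisj hxA (h ▸ hbB)
      have h3 : y ≠ b := fun h => Finset.disjoint_left.1 hdisj hyA (h ▸ hbB)
      simp [hxy, h2, h3.symm]
    · -- k ≥ 2
      have hδ2 : 2 ≤ G.minDegree := by omega
      obtain ⟨b₁, hb₁⟩ := Finset.card_pos.1 (lt_of_lt_of_le δpos (hdeg x))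
      have hb₁B : b₁ ∈ B := hNA x hxA hb₁
      obtain ⟨bk, hbk⟩ : (G.neighborFinset y \ {b₁}).Nonempty := by
        rw [← Finset.card_pos]
        have := Finset.card_le_card_sdiff_add_card (s := G.neighborFinset y) (t := {b₁})
        have := hdeg y
        simp only [Finset.card_singleton] at *
        omega
      rw [Finset.mem_sdiff, Finset.mem_singleton] at hbk
      have hbkB : bk ∈ B := hNA y hyA hbk.1
      have hbkne : bk ≠ b₁ := hbk.2
      have hcard2 : ({b₁, bk} : Finset V).card ≤ 2 := Finset.card_insert_le _ _ |>.trans (by simp)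
      obtain ⟨s, hs, hscard⟩ := Finset.exists_subset_card_eq (s := B \ {b₁, bk}) (n := k - 2) (by
        have h1 : ({b₁, bk} : Finset V) ⊆ B := by
          intro v hv; rcases Finset.mem_insert.1 hv with rfl | hv
          · exact hb₁B
          · rw [Finset.mem_singleton] at hv; exact hv ▸ hbkB
        have h2 := Finset.card_sdiff_of_subset h1
        omega)
      set l := s.toList with hl
      have hlnd : l.Nodup := s.nodup_toList
      have hllen : l.length = k - 2 := by rw [hl, Finset.length_toList, hscard]
      have hlmem : ∀ v ∈ l, v ∈ B \ ({b₁, bk} : Finset V) := fun v hv =>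
        hs (by rwa [← Finset.mem_toList])
      have hnd : (b₁ :: (l ++ [bk])).Nodup := by
        rw [List.nodup_cons, List.nodup_append]
        refine ⟨?_, hlnd, by simp, ?_⟩
        · intro h
          rcases List.mem_append.1 h with h | h
          · have := hlmem b₁ h; rw [Finset.mem_sdiff] at this
            exact this.2 (by simp)
          · simp at h; exact hbkne h.symm
        · intro v hv b h hvb
          simp only [List.mem_singleton] at h
          have h2 := hlmem v hv; rw [Finset.mem_sdiff] at h2
          exact h2.2 (by simp [hvb, h])
      have hBmem : ∀ v ∈ b₁ :: (l ++ [bk]), v ∈ B := by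
        intro v hv
        rcases List.mem_cons.1 hv with rfl | hv
        · exact hb₁B
        rcases List.mem_append.1 hv with hv | hv
        · exact (Finset.mem_sdiff.1 (hlmem v hv)).1
        · simp at hv; exact hv ▸ hbkB
      have hFcard : ({x, y} : Finset V).card = 2 := by
        rw [Finset.card_insert_of_notMem (by simpa using hxy), Finset.card_singleton]
      obtain ⟨w', hw'p, hw'len, hw'supp⟩ := chain_aux G A B hdisj hNB hcomB l
        ({x, y} : Finset V) b₁ bk hnd hBmem (by rw [hFcard, hllen]; omega)
      have hxw' : x ∉ w'.support := by
        intro h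
        rcases hw'supp x h with h' | h'
        · exact Finset.disjoint_left.1 hdisj hxA (hBmem x h')
        · exact h'.2 (by simp)
      have hyw' : y ∉ w'.support := by
        intro h
        rcases hw'supp y h with h' | h'
        · exact Finset.disjoint_left.1 hdisj hyA (hBmem y h')
        · exact h'.2 (by simp)
      refine ⟨Walk.cons ((G.mem_neighborFinset _ _).1 hb₁)
        (w'.append (Walk.cons ((G.mem_neighborFinset _ _).1 hbk.1).symm Walk.nil)), ?_, ?_⟩
      · rw [Walk.isPath_def]
        simp only [Walk.support_cons, Walk.support_append, Walk.support_nil, List.tail]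
        rw [List.nodup_cons, List.nodup_append]
        refine ⟨?_, ⟨hw'p.2, by simp, fun v hv b h hvb => by simp at h; exact hyw' (by rw [← h, ← hvb]; exact hv)⟩⟩
        intro h
        rcases List.mem_append.1 h with h | h
        · exact hxw' h
        · simp at h; exact hxy h
      · simp only [Walk.length_cons, Walk.length_append, Walk.length_nil, hw'len, hllen]
        omega
  · -- x, y ∈ B
    obtain ⟨s, hs, hscard⟩ := Finset.exists_subset_card_eq (s := B \ {x, y}) (n := k - 1) (by
      have h1 : ({x, y} : Finset V) ⊆ B := by
        intro v hv; rcases Finset.mem_insert.1 hv with rfl | hv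
        · exact hxB
        · rw [Finset.mem_singleton] at hv; exact hv ▸ hyB
      have h2 := Finset.card_sdiff_of_subset h1
      have h3 : ({x, y} : Finset V).card ≤ 2 := Finset.card_insert_le _ _ |>.trans (by simp)
      omega)
    set l := s.toList with hl
    have hlnd : l.Nodup := s.nodup_toList
    have hllen : l.length = k - 1 := by rw [hl, Finset.length_toList, hscard]
    have hlmem : ∀ v ∈ l, v ∈ B \ ({x, y} : Finset V) := fun v hv =>
      hs (by rwa [← Finset.mem_toList])
    have hnd : (x :: (l ++ [y])).Nodup := by
      rw [List.nodup_cons, List.nodup_append]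
      refine ⟨?_, hlnd, by simp, ?_⟩
      · intro h
        rcases List.mem_append.1 h with h | h
        · have := hlmem x h; rw [Finset.mem_sdiff] at this
          exact this.2 (by simp)
        · simp at h; exact hxy h
      · intro v hv b h hvb
        simp only [List.mem_singleton] at h
        have h2 := hlmem v hv; rw [Finset.mem_sdiff] at h2
        exact h2.2 (by simp [hvb, h])
    have hBmem : ∀ v ∈ x :: (l ++ [y]), v ∈ B := by
      intro v hv
      rcases List.mem_cons.1 hv with rfl | hv
      · exact hxB
      rcases List.mem_append.1 hv with hv | hv
      · exact (Finset.mem_sdiff.1 (hlmem v hv)).1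
      · simp at hv; exact hv ▸ hyB
    obtain ⟨w, hwp, hwlen, -⟩ := chain_aux G A B hdisj hNB hcomB l
      (∅ : Finset V) x y hnd hBmem (by simp only [Finset.card_empty, hllen]; omega)
    exact ⟨w, hwp, by rw [hwlen, hllen]; omega⟩
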